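/- arXiv:2007.03736 — 4 statements merged into one kernel-verified Lean document; each statement's English description precedes it below -/
import Mathlib

section
/- Let μ be a finite Borel measure on ℝ^d with closed support K_μ, let φ : K_μ → ℝ^d be Borel measurable, and let ν = φ_*μ be the pushforward measure. Then the following are equivalent: (1) φ is μ-essentially injective, i.e. for every f ∈ L²(μ) there exists h ∈ L²(ν) such that f(x) = h(φ(x)) for μ-a.e. x; (2) there exists a Borel set 𝒩 ⊂ K_μ with μ(𝒩) = 0 such that the restriction of φ to K_μ ∖ 𝒩 is injective. -/
open MeasureTheory Filter Set
open scoped Real ENNReal Topology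

noncomputable section

/-- `φ` is `μ`-essentially injective: every `f ∈ L²(μ)` factors `μ`-a.e. through `φ`
with a factor in `L²(φ⋆μ)`. -/
def EssInj {α β : Type*} [MeasurableSpace α] [MeasurableSpace β]
    (μ : Measure α) (φ : α → β) : Prop :=
  ∀ f : α → ℂ, MemLp f 2 μ →
    ∃ h : β → ℂ, MemLp h 2 (Measure.map φ μ) ∧ f =ᵐ[μ] fun x => h (φ x)

/-- The closed support `K_μ` of a Borel measure: the set of points all of whose open
neighbourhoods have positive measure. -/
def msupport {α : Type*} [TopologicalSpace α] [MeasurableSpace α] (μ : Measure α) : Set α :=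
  {x | ∀ U : Set α, IsOpen U → x ∈ U → 0 < μ U}

/-- For a finite Borel measure `μ` on `ℝ^d` with closed support `K_μ` and a
Borel measurable `φ`, `φ` is `μ`-essentially injective if and only if there is a Borel set
`𝒩 ⊆ K_μ` with `μ 𝒩 = 0` such that `φ` is injective on `K_μ \ 𝒩`. -/
theorem statement1 {d : ℕ} (μ : Measure (Fin d → ℝ)) [IsFiniteMeasure μ]
    (φ : (Fin d → ℝ) → (Fin d → ℝ)) (hφ : Measurable φ) :
    EssInj μ φ ↔
      ∃ N : Set (Fin d → ℝ), MeasurableSet N ∧ N ⊆ msupport μ ∧ μ N = 0 ∧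
        Set.InjOn φ (msupport μ \ N) := by
  have hclosed : IsClosed (msupport μ) := by
    rw [← isOpen_compl_iff, isOpen_iff_mem_nhds]
    intro x hx
    simp only [msupport, mem_compl_iff, mem_setOf_eq, not_forall] at hx
    obtain ⟨U, hU, hxU, hμU⟩ := hx
    push_neg at hμU
    have hμU0 : μ U = 0 := le_antisymm hμU bot_le
    exact Filter.mem_of_superset (hU.mem_nhds hxU) fun y hy => by
      simp only [msupport, mem_compl_iff, mem_setOf_eq, not_forall]
      exact ⟨U, hU, hy, by simp [hμU0]⟩
  have hcompl : μ (msupport μ)ᶜ = 0 := by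
    have hUnion : (msupport μ)ᶜ = ⋃₀ {U | IsOpen U ∧ μ U = 0} := by
      ext x
      simp only [msupport, mem_compl_iff, mem_setOf_eq, not_forall, mem_sUnion]
      constructor
      · rintro ⟨U, hU, hxU, hμU⟩
        push_neg at hμU
        exact ⟨U, ⟨hU, le_antisymm hμU bot_le⟩, hxU⟩
      · rintro ⟨U, ⟨hU, hμU⟩, hxU⟩
        exact ⟨U, hU, hxU, by simp [hμU]⟩
    obtain ⟨T, hTc, hTsub, hTU⟩ :=
      TopologicalSpace.isOpen_sUnion_countable {U | IsOpen U ∧ μ U = 0}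
        (fun s hs => hs.1)
    rw [hUnion, ← hTU]
    exact (measure_sUnion_null_iff hTc).2 fun U hU => (hTsub hU).2
  constructor
  · -- EssInj → essentially injective off a null set
    intro hess
    have key : ∀ i : Fin d, ∃ h : (Fin d → ℝ) → ℂ,
        (fun x => (Real.arctan (x i) : ℂ)) =ᵐ[μ] fun x => h (φ x) := by
      intro i
      have hmeas : AEStronglyMeasurable (fun x : Fin d → ℝ => (Real.arctan (x i) : ℂ)) μ :=
        (Complex.continuous_ofReal.comp
          (Real.continuous_arctan.comp (continuous_apply i))).aestronglyMeasurable
      have hmem : MemLp (fun x : Fin d → ℝ => (Real.arctan (x i) : ℂ)) 2 μ := by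
        refine MemLp.of_bound hmeas (Real.pi / 2) ?_
        filter_upwards with x
        rw [Complex.norm_real]
        exact abs_le.2 ⟨(Real.neg_pi_div_two_lt_arctan _).le, (Real.arctan_lt_pi_div_two _).le⟩
      obtain ⟨h, _, hae⟩ := hess _ hmem
      exact ⟨h, hae⟩
    choose h hh using key
    have hNull : ∀ i : Fin d, ∃ Ni : Set (Fin d → ℝ), MeasurableSet Ni ∧ μ Ni = 0 ∧
        ∀ x ∉ Ni, (Real.arctan (x i) : ℂ) = h i (φ x) := by
      intro i
      obtain ⟨Ni, hsub, hm, h0⟩ := exists_measurable_superset_of_null (ae_iff.1 (hh i))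
      exact ⟨Ni, hm, h0, fun x hx => by
        by_contra hne
        exact hx (hsub hne)⟩
    choose Ni hNim hNi0 hNieq using hNull
    refine ⟨msupport μ ∩ ⋃ i, Ni i,
      hclosed.measurableSet.inter (MeasurableSet.iUnion fun i => hNim i),
      inter_subset_left, ?_, ?_⟩
    · exact measure_mono_null (inter_subset_right.trans (subset_refl _))
        (measure_iUnion_null hNi0)
    · intro x hx y hy hxy
      have hxN : ∀ i, x ∉ Ni i := by
        intro i hxi
        exact hx.2 ⟨hx.1, mem_iUnion.2 ⟨i, hxi⟩⟩
      have hyN : ∀ i, y ∉ Ni i := by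
        intro i hyi
        exact hy.2 ⟨hy.1, mem_iUnion.2 ⟨i, hyi⟩⟩
      funext i
      have : (Real.arctan (x i) : ℂ) = (Real.arctan (y i) : ℂ) := by
        rw [hNieq i x (hxN i), hNieq i y (hyN i), hxy]
      exact Real.arctan_injective (Complex.ofReal_inj.1 this)
  · -- injective off a null set → EssInj
    rintro ⟨N, hNm, _, hN0, hinj⟩ f hf
    set S : Set (Fin d → ℝ) := msupport μ \ N with hS
    have hSm : MeasurableSet S := hclosed.measurableSet.diff hNm
    haveI : StandardBorelSpace S := hSm.standardBorel
    have hφS : Measurable fun x : S => φ x := hφ.comp measurable_subtype_coe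
    have hinjS : Function.Injective fun x : S => φ x := fun a b hab =>
      Subtype.ext (hinj a.2 b.2 hab)
    have hemb : MeasurableEmbedding fun x : S => φ x := hφS.measurableEmbedding hinjS
    have hg : Measurable fun x : S => hf.1.mk f x :=
      (hf.1.stronglyMeasurable_mk.measurable).comp measurable_subtype_coe
    obtain ⟨h, hhm, hcomp⟩ := hemb.exists_measurable_extend hg fun _ => ⟨0⟩
    have hSc : μ Sᶜ = 0 := by
      have : Sᶜ ⊆ (msupport μ)ᶜ ∪ N := by
        intro x hx
        simp only [hS, mem_diff, not_and, not_not, mem_compl_iff] at hx ⊢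
        by_cases hxs : x ∈ msupport μ
        · exact Or.inr (hx hxs)
        · exact Or.inl hxs
      exact measure_mono_null this (measure_union_null hcompl hN0)
    have hSae : ∀ᵐ x ∂μ, x ∈ S := by
      rw [ae_iff]
      exact hSc
    have hae : f =ᵐ[μ] fun x => h (φ x) := by
      filter_upwards [hf.1.ae_eq_mk, hSae] with x hx hxS
      rw [hx]
      exact (congrFun hcomp ⟨x, hxS⟩).symm
    refine ⟨h, ?_, hae⟩
    rw [memLp_map_measure_iff hhm.aestronglyMeasurable hφ.aemeasurable]
    exact hf.ae_eq hae
end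
end

section
/- Let K ⊂ ℝ^d be a bounded measurable set of positive Lebesgue measure and let φ : K → ℝ^d be a continuous function mapping Lebesgue measure zero sets to measure zero sets. Suppose there exist a set E ⊂ ℝ^d of positive Lebesgue measure and disjoint measurable sets U₁, U₂ ⊂ K, each of positive Lebesgue measure, with E = φ(U₁) = φ(U₂). Then φ is not μ-essentially injective, where μ is Lebesgue measure restricted to K. -/
open MeasureTheory Filter Set
open scoped Real ENNReal Topology

noncomputable section

/-- Let `K ⊆ ℝ^d` be bounded measurable of positive Lebesgue measure, and
let `φ : K → ℝ^d` be continuous and map null sets to null sets.  If a set `E` of positive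
measure satisfies `E = φ(U₁) = φ(U₂)` for disjoint subsets `U₁, U₂ ⊆ K` of positive measure,
then `φ` is not essentially injective with respect to Lebesgue measure restricted to `K`. -/
theorem statement12 {d : ℕ} (K : Set (Fin d → ℝ)) (hKb : Bornology.IsBounded K)
    (hKm : MeasurableSet K) (hKpos : 0 < volume K)
    (φ : (Fin d → ℝ) → (Fin d → ℝ)) (hc : ContinuousOn φ K)
    (hnull : ∀ N ⊆ K, volume N = 0 → volume (φ '' N) = 0)
    (E U₁ U₂ : Set (Fin d → ℝ))
    (hU₁ : U₁ ⊆ K) (hU₂ : U₂ ⊆ K) (hU₁m : MeasurableSet U₁) (hU₂m : MeasurableSet U₂)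
    (hdisj : Disjoint U₁ U₂) (hU₁pos : 0 < volume U₁) (hU₂pos : 0 < volume U₂)
    (hEpos : 0 < volume E) (hE₁ : E = φ '' U₁) (hE₂ : E = φ '' U₂) :
    ¬ EssInj (volume.restrict K) φ := by
  intro hinj
  have hKfin : volume K ≠ ⊤ := hKb.measure_lt_top.ne
  set f : (Fin d → ℝ) → ℂ := U₁.indicator (fun _ => 1) with hf
  have hfmem : MemLp f 2 (volume.restrict K) := by
    apply memLp_indicator_const 2 hU₁m (1 : ℂ)
    right
    refine ne_top_of_le_ne_top hKfin ?_
    rw [Measure.restrict_apply' hKm]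
    exact measure_mono (inter_subset_right)
  obtain ⟨h, _, hae⟩ := hinj f hfmem
  set N : Set (Fin d → ℝ) := {x | f x ≠ h (φ x)} ∩ K with hN
  have hNnull : volume N = 0 := by
    have := hae
    rw [Filter.EventuallyEq, ae_iff, Measure.restrict_apply' hKm] at this
    exact this
  have hφN : volume (φ '' N) = 0 := hnull N inter_subset_right hNnull
  have hpos : 0 < volume (E \ φ '' N) := by
    have : volume E ≤ volume (E \ φ '' N) + volume (φ '' N) :=
      (measure_mono (subset_diff_union E (φ '' N))).trans (measure_union_le _ _)
    rw [hφN, add_zero] at this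
    exact lt_of_lt_of_le hEpos this
  obtain ⟨x, hxE, hxN⟩ := nonempty_of_measure_ne_zero hpos.ne' 
  obtain ⟨u₁, hu₁, hφu₁⟩ := hE₁ ▸ hxE
  obtain ⟨u₂, hu₂, hφu₂⟩ := hE₂ ▸ hxE
  have h1 : f u₁ = h x := by
    by_contra hne
    exact hxN ⟨u₁, ⟨by simpa [hφu₁] using hne, hU₁ hu₁⟩, hφu₁⟩
  have h2 : f u₂ = h x := by
    by_contra hne
    exact hxN ⟨u₂, ⟨by simpa [hφu₂] using hne, hU₂ hu₂⟩, hφu₂⟩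
  have hf1 : f u₁ = 1 := indicator_of_mem hu₁ _
  have hf2 : f u₂ = 0 := indicator_of_notMem (disjoint_right.mp hdisj hu₂) _
  rw [hf1] at h1; rw [hf2] at h2
  exact one_ne_zero (h1.trans h2.symm)
end
end

section
/- Let φ : [0,1] → ℝ be a continuous function mapping Lebesgue measure zero sets to Lebesgue measure zero sets. If φ is μ-essentially injective, where μ is Lebesgue measure restricted to [0,1], then φ is injective on [0,1]. -/
open MeasureTheory Filter Set
open scoped Real ENNReal Topology

noncomputable section

/-- Let `φ : [0,1] → ℝ` be continuous and map Lebesgue null sets to null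
sets.  If `φ` is essentially injective with respect to Lebesgue measure restricted to
`[0,1]`, then `φ` is injective on `[0,1]`. -/
theorem statement13 (φ : ℝ → ℝ) (hc : ContinuousOn φ (Set.Icc 0 1))
    (hnull : ∀ N ⊆ Set.Icc (0 : ℝ) 1, volume N = 0 → volume (φ '' N) = 0)
    (hess : EssInj (volume.restrict (Set.Icc (0 : ℝ) 1)) φ) :
    Set.InjOn φ (Set.Icc (0 : ℝ) 1) := by
  haveI : Fact ((volume : Measure ℝ) (Set.Icc 0 1) < ⊤) := ⟨by simp⟩
  -- apply essential injectivity to the identity function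
  have hf : MemLp (fun x : ℝ => (x : ℂ)) 2 (volume.restrict (Set.Icc 0 1)) := by
    apply MemLp.of_bound
      (Continuous.aestronglyMeasurable (by continuity)) 1
    filter_upwards [ae_restrict_mem measurableSet_Icc] with x hx
    simp only [Complex.norm_real, Real.norm_eq_abs]
    exact abs_le.mpr ⟨by linarith [hx.1], hx.2⟩
  obtain ⟨h, -, hae⟩ := hess _ hf
  -- the bad set N
  set T : Set ℝ := {x | (x : ℂ) = h (φ x)} with hT
  set N : Set ℝ := {x | (x : ℂ) ≠ h (φ x)} ∩ Set.Icc 0 1 with hNdef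
  have hNnull : volume N = 0 := by
    have := ae_iff.mp hae
    rwa [Measure.restrict_apply' measurableSet_Icc] at this
  have hNsub : N ⊆ Set.Icc (0 : ℝ) 1 := fun x hx => hx.2
  have hA : volume (φ '' N) = 0 := hnull N hNsub hNnull
  -- good points
  have hgood : ∀ x ∈ Set.Icc (0 : ℝ) 1, x ∉ N → (x : ℂ) = h (φ x) := by
    intro x hx hxN
    by_contra hcon
    exact hxN ⟨hcon, hx⟩
  have hinj : ∀ x ∈ Set.Icc (0 : ℝ) 1, ∀ y ∈ Set.Icc (0 : ℝ) 1,
      x ∉ N → y ∉ N → φ x = φ y → x = y := by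
    intro x hx y hy hxN hyN hxy
    have ex := hgood x hx hxN
    have ey := hgood y hy hyN
    rw [hxy] at ex
    have : (x : ℂ) = (y : ℂ) := ex.trans ey.symm
    exact_mod_cast this
  intro a ha b hb hfab
  by_contra hne
  wlog hab : a < b generalizing a b
  · exact this hb ha hfab.symm (Ne.symm hne)
      (lt_of_le_of_ne (not_lt.mp hab) (Ne.symm hne))
  by_cases hconst : ∀ t ∈ Set.Icc a b, φ t = φ a
  · -- φ constant on [a,b]: contradicts a.e. injectivity
    have hsub : Set.Icc a b ⊆ Set.Icc (0 : ℝ) 1 := Set.Icc_subset_Icc ha.1 hb.2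
    have hTb : volume (Set.Icc a b \ T) = 0 := by
      apply measure_mono_null _ hNnull
      intro x hx
      exact ⟨hx.2, hsub hx.1⟩
    have hpos : volume (Set.Icc a b ∩ T) ≠ 0 := by
      intro h0
      have hle : volume (Set.Icc a b) ≤
          volume (Set.Icc a b ∩ T) + volume (Set.Icc a b \ T) := by
        refine le_trans (measure_mono ?_) (measure_union_le _ _)
        intro x hx
        by_cases hxT : x ∈ T
        · exact Or.inl ⟨hx, hxT⟩
        · exact Or.inr ⟨hx, hxT⟩
      rw [h0, hTb, add_zero] at hle
      have : volume (Set.Icc a b) = 0 := le_antisymm hle zero_le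
      rw [Real.volume_Icc] at this
      have : (b - a : ℝ) ≤ 0 := by
        by_contra hba
        push_neg at hba
        rw [ENNReal.ofReal_eq_zero] at this
        linarith
      linarith
    have hnsub : ¬ (Set.Icc a b ∩ T).Subsingleton := fun hs =>
      hpos (hs.countable.measure_zero _)
    obtain ⟨x, hx, y, hy, hxy⟩ := Set.not_subsingleton_iff.mp hnsub
    have hxN : x ∉ N := fun hxN => hxN.1 hx.2
    have hyN : y ∉ N := fun hyN => hyN.1 hy.2
    exact hxy (hinj x (hsub hx.1) y (hsub hy.1) hxN hyN
      ((hconst x hx.1).trans (hconst y hy.1).symm))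
  · -- φ not constant on [a,b]: IVT gives two preimages of a common value
    push_neg at hconst
    obtain ⟨t, ht, hφt⟩ := hconst
    have hta : a < t := lt_of_le_of_ne ht.1 (fun e => hφt (by rw [e]))
    have htb : t < b := lt_of_le_of_ne ht.2 (fun e => hφt (by rw [e, ← hfab]))
    have hsub : Set.Icc a b ⊆ Set.Icc (0 : ℝ) 1 := Set.Icc_subset_Icc ha.1 hb.2
    set c := min (φ a) (φ t) with hcdef
    set d := max (φ a) (φ t) with hddef
    have hcd : c < d := min_lt_max.mpr (Ne.symm hφt)
    have hne' : (Set.Ioo c d \ φ '' N).Nonempty := by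
      rw [Set.nonempty_iff_ne_empty]
      intro hemp
      have hsubA : Set.Ioo c d ⊆ φ '' N := by
        intro z hz
        by_contra hzA
        exact Set.eq_empty_iff_forall_notMem.mp hemp z ⟨hz, hzA⟩
      have := measure_mono_null hsubA hA
      rw [Real.volume_Ioo, ENNReal.ofReal_eq_zero] at this
      linarith
    obtain ⟨v, hv, hvA⟩ := hne'
    have hvt : v ≠ φ t := by
      intro e
      rcases min_cases (φ a) (φ t) with ⟨h1, h2⟩ | ⟨h1, h2⟩
      · rcases max_cases (φ a) (φ t) with ⟨h3, h4⟩ | ⟨h3, h4⟩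
        · have := hv.2; rw [e] at this; rw [hddef, h3] at this; linarith
        · have := hv.2; rw [e] at this; rw [hddef, h3] at this; linarith
      · have := hv.1; rw [e] at this; rw [hcdef, h1] at this; linarith
    -- x in [a,t] with φ x = v
    have hco1 : ContinuousOn φ (Set.uIcc a t) := by
      apply hc.mono
      rw [Set.uIcc_of_le hta.le]
      exact (Set.Icc_subset_Icc_right htb.le).trans hsub
    have hco2 : ContinuousOn φ (Set.uIcc t b) := by
      apply hc.mono
      rw [Set.uIcc_of_le htb.le]
      exact (Set.Icc_subset_Icc_left hta.le).trans hsub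
    have hv1 : v ∈ Set.uIcc (φ a) (φ t) := by
      rw [Set.uIcc, ← hcdef, ← hddef]
      exact Set.Ioo_subset_Icc_self hv
    have hv2 : v ∈ Set.uIcc (φ t) (φ b) := by
      rw [← hfab, Set.uIcc_comm]
      exact hv1
    obtain ⟨x, hx, hφx⟩ := intermediate_value_uIcc hco1 hv1
    obtain ⟨y, hy, hφy⟩ := intermediate_value_uIcc hco2 hv2
    rw [Set.uIcc_of_le hta.le] at hx
    rw [Set.uIcc_of_le htb.le] at hy
    have hxt : x ≠ t := fun e => hvt (by rw [← hφx, e])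
    have hyt : y ≠ t := fun e => hvt (by rw [← hφy, e])
    have hxy : x ≠ y := by
      intro e
      have h1 : x < t := lt_of_le_of_ne hx.2 hxt
      have h2 : t < y := lt_of_le_of_ne hy.1 (Ne.symm hyt)
      rw [e] at h1
      linarith
    have hxI : x ∈ Set.Icc (0 : ℝ) 1 :=
      hsub ⟨hx.1, hx.2.trans htb.le⟩
    have hyI : y ∈ Set.Icc (0 : ℝ) 1 :=
      hsub ⟨hta.le.trans hy.1, hy.2⟩
    have hxN : x ∉ N := fun hxN => hvA ⟨x, hxN, hφx⟩
    have hyN : y ∉ N := fun hyN => hvA ⟨y, hyN, hφy⟩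
    exact hxy (hinj x hxI y hyI hxN hyN (hφx.trans hφy.symm))
end
end

section
/- Let z, f ∈ C¹(ℝ) with z(t) ≠ 0 for all t, let K ∈ ℝ, and define φ : ℝ² → ℝ² by φ(x₁,x₂) = ( z(x₂) x₁ + f(x₂), ∫₁^{x₂} dτ / z(τ) + K ). If z(x₂) > 1 on a subset of (0,1) of positive Lebesgue measure, then φ([0,1)²) does not tile ℝ² by ℤ²; in fact, there exists a nonzero k ∈ ℤ² such that (φ((0,1)²) + k) ∩ φ((0,1)²) has positive Lebesgue measure. -/
open MeasureTheory Filter Set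
open scoped Real ENNReal Topology

noncomputable section

/-- Translation of a subset of `ℝ²` by an integer vector. -/
def trZ (k : ℤ × ℤ) (S : Set (ℝ × ℝ)) : Set (ℝ × ℝ) :=
  (fun p : ℝ × ℝ => (p.1 + (k.1 : ℝ), p.2 + (k.2 : ℝ))) '' S

open ContinuousLinearMap in
lemma det_clm_prod (D : ℝ × ℝ →L[ℝ] ℝ × ℝ) :
    D.det = (D (1,0)).1 * (D (0,1)).2 - (D (0,1)).1 * (D (1,0)).2 := by
  have : D.det = LinearMap.det (D : ℝ × ℝ →ₗ[ℝ] ℝ × ℝ) := rfl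
  rw [this, ← LinearMap.det_toMatrix (Module.Basis.finTwoProd ℝ), Matrix.det_fin_two]
  simp [LinearMap.toMatrix_apply, Module.Basis.coe_finTwoProd_repr, Module.Basis.finTwoProd_zero,
    Module.Basis.finTwoProd_one]

/-- Let `φ(x₁,x₂) = (z(x₂)x₁ + f(x₂), ∫₁^{x₂} dτ/z(τ) + K)` with
`z, f ∈ C¹(ℝ)`, `z` nowhere vanishing.  If `z > 1` on a subset of `(0,1)` of positive
measure, then `φ([0,1)²)` does not tile `ℝ²` by `ℤ²`; in fact some nonzero integer translate
of `φ((0,1)²)` meets it in a set of positive measure. -/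
theorem statement17 (z f : ℝ → ℝ) (hz : ContDiff ℝ 1 z) (hf : ContDiff ℝ 1 f)
    (hz0 : ∀ t, z t ≠ 0) (K : ℝ)
    (φ : ℝ × ℝ → ℝ × ℝ)
    (hφ : ∀ p : ℝ × ℝ, φ p = (z p.2 * p.1 + f p.2, (∫ τ in (1 : ℝ)..p.2, 1 / z τ) + K))
    (hbig : 0 < volume {t : ℝ | t ∈ Set.Ioo (0 : ℝ) 1 ∧ 1 < z t}) :
    ¬ ((∀ k k' : ℤ × ℤ, k ≠ k' →
          volume (trZ k (φ '' (Set.Ico (0:ℝ) 1 ×ˢ Set.Ico (0:ℝ) 1)) ∩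
                  trZ k' (φ '' (Set.Ico (0:ℝ) 1 ×ˢ Set.Ico (0:ℝ) 1))) = 0) ∧
        volume (Set.univ \ ⋃ k : ℤ × ℤ, trZ k (φ '' (Set.Ico (0:ℝ) 1 ×ˢ Set.Ico (0:ℝ) 1))) = 0)
    ∧ ∃ k : ℤ × ℤ, k ≠ 0 ∧
        0 < volume (trZ k (φ '' (Set.Ioo (0:ℝ) 1 ×ˢ Set.Ioo (0:ℝ) 1)) ∩
                    (φ '' (Set.Ioo (0:ℝ) 1 ×ˢ Set.Ioo (0:ℝ) 1))) := by
  have hzc : Continuous z := hz.continuous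
  -- z is everywhere positive
  have hA : {t : ℝ | t ∈ Set.Ioo (0 : ℝ) 1 ∧ 1 < z t}.Nonempty :=
    nonempty_of_measure_ne_zero hbig.ne'
  obtain ⟨t₀, ht₀⟩ := hA
  have hzpos : ∀ t, 0 < z t := by
    intro t
    rcases lt_trichotomy (z t) 0 with h | h | h
    · exfalso
      have : (0:ℝ) ∈ Set.uIcc (z t) (z t₀) := by
        rw [Set.mem_uIcc]; left; exact ⟨h.le, le_of_lt (lt_trans one_pos ht₀.2)⟩
      obtain ⟨s, _, hs⟩ := intermediate_value_uIcc (hzc.continuousOn (s := Set.uIcc t t₀)) this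
      exact hz0 s hs
    · exact absurd h (hz0 t)
    · exact h
  -- derivative of the second coordinate
  set g : ℝ → ℝ := fun t => (∫ τ in (1 : ℝ)..t, 1 / z τ) + K with hgdef
  have hzinvc : Continuous fun τ => 1 / z τ := continuous_const.div hzc hz0
  have hg : ∀ t, HasDerivAt g (1 / z t) t := by
    intro t
    have h1 : HasDerivAt (fun u => ∫ τ in (1 : ℝ)..u, 1 / z τ) (1 / z t) t :=
      intervalIntegral.integral_hasDerivAt_right (hzinvc.intervalIntegrable _ _)
        (hzinvc.stronglyMeasurableAtFilter _ _) hzinvc.continuousAt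
    exact h1.add_const K
  have hgm : StrictMono g := by
    apply strictMono_of_deriv_pos
    intro t
    rw [(hg t).deriv]
    exact div_pos one_pos (hzpos t)
  -- find a good subset B and constant
  obtain ⟨n, hn⟩ : ∃ n : ℕ, 0 < volume {t : ℝ | (t ∈ Set.Ioo (0:ℝ) 1 ∧ 1 < z t) ∧
      1 + 1/(n+1 : ℝ) ≤ z t} := by
    by_contra h
    push_neg at h
    have hsub : {t : ℝ | t ∈ Set.Ioo (0 : ℝ) 1 ∧ 1 < z t} ⊆
        ⋃ n : ℕ, {t : ℝ | (t ∈ Set.Ioo (0:ℝ) 1 ∧ 1 < z t) ∧ 1 + 1/(n+1 : ℝ) ≤ z t} := by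
      intro t ht
      obtain ⟨m, hm⟩ := exists_nat_one_div_lt (sub_pos.mpr ht.2)
      exact Set.mem_iUnion.mpr ⟨m, ht, by linarith⟩
    have := measure_mono_null hsub
      (measure_iUnion_null fun m => le_antisymm (h m) zero_le)
    exact absurd this hbig.ne'
  set d : ℝ := 1 + 1/(n+1 : ℝ) with hddef
  have hd1 : 1 < d := by
    rw [hddef]
    have : (0:ℝ) < 1/(n+1 : ℝ) := by positivity
    linarith
  set c : ℝ := d⁻¹ with hcdef
  have hc0 : 0 < c := by positivity
  have hc1 : c < 1 := by
    rw [hcdef]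
    exact inv_lt_one_of_one_lt₀ hd1
  set B : Set ℝ := Set.Ioo (0:ℝ) 1 ∩ z ⁻¹' Set.Ici d with hBdef
  have hBm : MeasurableSet B := measurableSet_Ioo.inter (hzc.measurable measurableSet_Ici)
  have hBvol : 0 < volume B := by
    refine lt_of_lt_of_le hn (measure_mono ?_)
    rintro t ⟨⟨ht01, _⟩, htd⟩
    exact ⟨ht01, htd⟩
  have hBz : ∀ t ∈ B, (z t)⁻¹ ≤ c := by
    intro t ht
    rw [hcdef]
    exact inv_anti₀ (by linarith) ht.2
  -- the sets
  set E : Set (ℝ × ℝ) := Set.Ioo c 1 ×ˢ B with hEdef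
  have hEm : MeasurableSet E := measurableSet_Ioo.prod hBm
  have hEvol : 0 < volume E := by
    rw [hEdef, Measure.volume_eq_prod, Measure.prod_prod, Real.volume_Ioo]
    exact ENNReal.mul_pos (ENNReal.ofReal_pos.mpr (by linarith)).ne' hBvol.ne'
  -- the derivative
  have hφ' : φ = fun p : ℝ × ℝ => (z p.2 * p.1 + f p.2, g p.2) := by
    funext p; rw [hφ]
  subst hφ'
  set D : ℝ × ℝ → (ℝ × ℝ →L[ℝ] ℝ × ℝ) := fun p =>
    (z p.2 • ContinuousLinearMap.fst ℝ ℝ ℝ +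
      p.1 • (deriv z p.2 • ContinuousLinearMap.snd ℝ ℝ ℝ) +
      deriv f p.2 • ContinuousLinearMap.snd ℝ ℝ ℝ).prod
      ((1 / z p.2) • ContinuousLinearMap.snd ℝ ℝ ℝ) with hDdef
  have hD : ∀ p : ℝ × ℝ, HasFDerivAt (fun p : ℝ × ℝ => (z p.2 * p.1 + f p.2, g p.2)) (D p) p := by
    intro p
    have h1 : HasFDerivAt (fun q : ℝ × ℝ => z q.2) (deriv z p.2 • ContinuousLinearMap.snd ℝ ℝ ℝ) p :=
      ((hz.differentiable one_ne_zero p.2).hasDerivAt).comp_hasFDerivAt p (hasFDerivAt_snd)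
    have h2 : HasFDerivAt (fun q : ℝ × ℝ => f q.2) (deriv f p.2 • ContinuousLinearMap.snd ℝ ℝ ℝ) p :=
      ((hf.differentiable one_ne_zero p.2).hasDerivAt).comp_hasFDerivAt p (hasFDerivAt_snd)
    have h3 : HasFDerivAt (fun q : ℝ × ℝ => g q.2) ((1 / z p.2) • ContinuousLinearMap.snd ℝ ℝ ℝ) p :=
      (hg p.2).comp_hasFDerivAt p (hasFDerivAt_snd)
    have h4 := (h1.mul hasFDerivAt_fst).add h2
    exact HasFDerivAt.prodMk h4 h3
  have hDdet : ∀ p : ℝ × ℝ, |(D p).det| = 1 := by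
    intro p
    rw [det_clm_prod]
    have hzp := hz0 p.2
    simp only [hDdef, ContinuousLinearMap.prod_apply, ContinuousLinearMap.add_apply,
      ContinuousLinearMap.smul_apply, ContinuousLinearMap.coe_fst', ContinuousLinearMap.coe_snd',
      smul_eq_mul]
    simp [hzp]
  -- injectivity
  have hinj : Set.InjOn (fun p : ℝ × ℝ => (z p.2 * p.1 + f p.2, g p.2)) Set.univ := by
    rintro ⟨a, b⟩ - ⟨a', b'⟩ - h
    simp only [Prod.mk.injEq] at h
    have hb : b = b' := hgm.injective h.2
    subst hb
    have : z b * a = z b * a' := by linarith [h.1]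
    have := mul_left_cancel₀ (hz0 b) this
    exact Prod.ext this rfl
  -- measure of image
  have himg : volume ((fun p : ℝ × ℝ => (z p.2 * p.1 + f p.2, g p.2)) '' E) = volume E := by
    rw [← lintegral_abs_det_fderiv_eq_addHaar_image volume hEm
      (fun p _ => (hD p).hasFDerivWithinAt) (hinj.mono (Set.subset_univ E))]
    rw [setLIntegral_congr_fun hEm
      (fun p _ => by rw [hDdet p, ENNReal.ofReal_one]), setLIntegral_one]
  -- inclusions
  have hsubIoo : E ⊆ Set.Ioo (0:ℝ) 1 ×ˢ Set.Ioo (0:ℝ) 1 := by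
    rintro ⟨a, t⟩ ⟨ha, ht⟩
    exact ⟨⟨lt_trans hc0 ha.1, ha.2⟩, ht.1⟩
  set F : ℝ × ℝ → ℝ × ℝ := fun p => (z p.2 * p.1 + f p.2, g p.2) with hFdef
  have hkey : F '' E ⊆
      trZ (1,0) (F '' (Set.Ioo (0:ℝ) 1 ×ˢ Set.Ioo (0:ℝ) 1)) ∩
        F '' (Set.Ioo (0:ℝ) 1 ×ˢ Set.Ioo (0:ℝ) 1) := by
    rintro _ ⟨⟨a, t⟩, hp, rfl⟩
    obtain ⟨ha, ht⟩ := hp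
    have hinv : (z t)⁻¹ ≤ c := hBz t ht
    have hinv0 : 0 < (z t)⁻¹ := inv_pos.mpr (hzpos t)
    constructor
    · refine ⟨F (a - (z t)⁻¹, t), ⟨(a - (z t)⁻¹, t), ⟨⟨?_, ?_⟩, ht.1⟩, rfl⟩, ?_⟩
      · linarith [ha.1]
      · linarith [ha.2]
      · simp only [hFdef]
        have hzt := hz0 t
        refine Prod.ext ?_ (by simp)
        show z t * (a - (z t)⁻¹) + f t + ((1 : ℤ) : ℝ) = z t * a + f t
        field_simp
        ring
    · exact ⟨(a, t), hsubIoo ⟨ha, ht⟩, rfl⟩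
  have hIooIco : F '' (Set.Ioo (0:ℝ) 1 ×ˢ Set.Ioo (0:ℝ) 1) ⊆
      F '' (Set.Ico (0:ℝ) 1 ×ˢ Set.Ico (0:ℝ) 1) :=
    Set.image_mono (Set.prod_mono Set.Ioo_subset_Ico_self Set.Ioo_subset_Ico_self)
  have hpos : 0 < volume (trZ (1,0) (F '' (Set.Ioo (0:ℝ) 1 ×ˢ Set.Ioo (0:ℝ) 1)) ∩
      F '' (Set.Ioo (0:ℝ) 1 ×ˢ Set.Ioo (0:ℝ) 1)) := by
    calc 0 < volume E := hEvol
      _ = volume (F '' E) := himg.symm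
      _ ≤ _ := measure_mono hkey
  refine ⟨?_, ⟨(1,0), by decide, hpos⟩⟩
  rintro ⟨h1, -⟩
  have h0 := h1 (1,0) (0,0) (by decide)
  have htr0 : ∀ S : Set (ℝ × ℝ), trZ (0,0) S = S := by
    intro S
    simp [trZ]
  rw [htr0] at h0
  have hmono : trZ (1,0) (F '' (Set.Ioo (0:ℝ) 1 ×ˢ Set.Ioo (0:ℝ) 1)) ∩
      F '' (Set.Ioo (0:ℝ) 1 ×ˢ Set.Ioo (0:ℝ) 1) ⊆
      trZ (1,0) (F '' (Set.Ico (0:ℝ) 1 ×ˢ Set.Ico (0:ℝ) 1)) ∩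
      F '' (Set.Ico (0:ℝ) 1 ×ˢ Set.Ico (0:ℝ) 1) :=
    Set.inter_subset_inter (Set.image_mono hIooIco) hIooIco
  have := lt_of_lt_of_le hpos (measure_mono hmono)
  rw [h0] at this
  exact lt_irrefl _ this
end
end
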